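/- arXiv:1405.7190 — 3 statements merged into one kernel-verified Lean document; each statement's English description precedes it below -/
import Mathlib

section
/- Let n ≥ 2 be an integer and d a positive integer. Then there exist constants c_0 > 0 and c_1 > 0, depending only on n and d, such that: for all M ≥ 1 and all Δ > 0 with Δ ≤ c_0·M^{1 − 1/(2n)}, and every measurable function w : ℝ → ℝ with 0 ≤ w ≤ 1, w(x) = 0 for x outside [M, M+Δ], and w(x) = 1 for x ∈ [M + Δ/4, M + 3Δ/4], one has |∫_M^{M+Δ} w(x)·e(d^{1/n}·x / M^{1 − 1/n} − n·d^{1/n}·x^{1/n})·x^{1/(2n) − 1/2} dx| ≥ c_1·Δ·M^{1/(2n) − 1/2}. -/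
open Complex Real MeasureTheory

lemma aux_rpow_ineq {M c r : ℝ} (hM : 0 < M) (hc : M ≤ c) (hr0 : 0 ≤ r) (hr1 : r ≤ 1) :
    M ^ (-r) - c ^ (-r) ≤ M ^ (-r - 1) * (c - M) := by
  have hc0 : 0 < c := hM.trans_le hc
  have hMr : 0 < M ^ r := Real.rpow_pos_of_pos hM r
  have hcr : 0 < c ^ r := Real.rpow_pos_of_pos hc0 r
  have hMrc : M ^ r ≤ c ^ r := Real.rpow_le_rpow hM.le hc hr0
  have hX : 0 ≤ M ^ (r - 1) * (c - M) := by
    have := Real.rpow_nonneg hM.le (r - 1)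
    nlinarith
  have hber : c ^ r ≤ M ^ r + r * (M ^ (r - 1) * (c - M)) := by
    have hs0 : (0:ℝ) ≤ (c - M) / M := div_nonneg (by linarith) hM.le
    have h2 : (1 + (c - M) / M) ^ r ≤ 1 + r * ((c - M) / M) :=
      rpow_one_add_le_one_add_mul_self (by linarith) hr0 hr1
    have h1 : c = M * (1 + (c - M) / M) := by field_simp; ring
    calc c ^ r = (M * (1 + (c - M) / M)) ^ r := by rw [← h1]
      _ = M ^ r * (1 + (c - M) / M) ^ r := Real.mul_rpow hM.le (by linarith)
      _ ≤ M ^ r * (1 + r * ((c - M) / M)) := by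
          exact mul_le_mul_of_nonneg_left h2 hMr.le
      _ = M ^ r + r * (M ^ (r - 1) * (c - M)) := by
          rw [Real.rpow_sub hM, Real.rpow_one]
          field_simp
  have hkey : c ^ r - M ^ r ≤ M ^ (r - 1) * (c - M) := by nlinarith
  have hMneg : M ^ (-r) = (M ^ r)⁻¹ := Real.rpow_neg hM.le r
  have hcneg : c ^ (-r) = (c ^ r)⁻¹ := Real.rpow_neg hc0.le r
  rw [hMneg, hcneg]
  have hdiff : (M ^ r)⁻¹ - (c ^ r)⁻¹ = (c ^ r - M ^ r) / (M ^ r * c ^ r) := by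
    field_simp
  rw [hdiff]
  calc (c ^ r - M ^ r) / (M ^ r * c ^ r)
      ≤ (M ^ (r - 1) * (c - M)) / (M ^ r * M ^ r) := by
        apply div_le_div₀ hX hkey (by positivity)
        exact mul_le_mul_of_nonneg_left hMrc hMr.le
    _ = M ^ (r - 1) / M ^ (r + r) * (c - M) := by
        rw [← Real.rpow_add hM]; ring
    _ = M ^ (r - 1 - (r + r)) * (c - M) := by rw [← Real.rpow_sub hM]
    _ = M ^ (-r - 1) * (c - M) := by ring_nf

/-- The resonating integral does not oscillate: for `Δ ≪ M^{1-1/(2n)}` and any weight `w`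
that is `1` on the middle half of `[M, M+Δ]` and between `0` and `1` elsewhere,
`|∫_M^{M+Δ} w(x) e(d^{1/n} x / M^{1-1/n} - n d^{1/n} x^{1/n}) x^{1/(2n)-1/2} dx|
  ≫ Δ M^{1/(2n)-1/2}`. -/
theorem resonating_integral_lower_bound (n : ℕ) (hn : 2 ≤ n) (d : ℕ) (hd : 0 < d) :
    ∃ c₀ c₁ : ℝ, 0 < c₀ ∧ 0 < c₁ ∧
      ∀ M : ℝ, 1 ≤ M → ∀ Δ : ℝ, 0 < Δ → Δ ≤ c₀ * M ^ (1 - 1/(2*(n : ℝ))) →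
      ∀ w : ℝ → ℝ, Measurable w → (∀ x, 0 ≤ w x) → (∀ x, w x ≤ 1) →
        (∀ x, x ∉ Set.Icc M (M + Δ) → w x = 0) →
        (∀ x ∈ Set.Icc (M + Δ/4) (M + 3*Δ/4), w x = 1) →
        c₁ * Δ * M ^ (1/(2*(n : ℝ)) - 1/2) ≤
          ‖(∫ x in M..(M + Δ), ((w x : ℝ) : ℂ) *
            Complex.exp (2 * (Real.pi : ℂ) * Complex.I *
              (((d : ℝ) ^ (1/(n : ℝ)) * x / M ^ (1 - 1/(n : ℝ)) -
                (n : ℝ) * (d : ℝ) ^ (1/(n : ℝ)) * x ^ (1/(n : ℝ)) : ℝ) : ℂ)) *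
            ((x ^ (1/(2*(n : ℝ)) - 1/2) : ℝ) : ℂ))‖ := by
  have hd1 : (1:ℝ) ≤ d := by exact_mod_cast hd
  have hdc : (d:ℝ)/(64*((d:ℝ)+1)^2) ≤ 1/64 := by
    rw [div_le_div_iff₀ (by positivity) (by norm_num)]
    nlinarith [sq_nonneg ((d:ℝ)), hd1]
  refine ⟨1/(8*((d:ℝ)+1)), 1/8, by positivity, by norm_num, ?_⟩
  intro M hM Δ hΔ hΔle w hwm hw0 hw1 hsupp hmid
  set c₀ : ℝ := 1/(8*((d:ℝ)+1)) with hc₀def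
  have hc₀0 : 0 < c₀ := by positivity
  have hc₀1 : c₀ ≤ 1 := by
    rw [hc₀def, div_le_one (by positivity)]
    linarith
  have hn2 : (2:ℝ) ≤ (n:ℝ) := by exact_mod_cast hn
  have hnR : (0:ℝ) < n := by linarith
  have hM0 : (0:ℝ) < M := lt_of_lt_of_le one_pos hM
  set p : ℝ := 1/(n:ℝ) with hpdef
  have hp0 : 0 < p := by positivity
  have hphalf : p ≤ 1/2 := by
    rw [hpdef, div_le_div_iff₀ hnR (by norm_num)]
    linarith
  set α : ℝ := 1/(2*(n:ℝ)) - 1/2 with hαdef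
  have hα2 : α = p/2 - 1/2 := by rw [hαdef, hpdef]; ring
  have hαneg : α ≤ 0 := by rw [hα2]; linarith
  have hα1 : -1 ≤ α := by rw [hα2]; linarith
  set D : ℝ := (d:ℝ) ^ p with hDdef
  have hD0 : 0 < D := Real.rpow_pos_of_pos (by positivity) p
  have hDled : D ≤ (d:ℝ) := by
    calc D = (d:ℝ) ^ p := hDdef
      _ ≤ (d:ℝ) ^ (1:ℝ) := Real.rpow_le_rpow_of_exponent_le hd1 (by linarith)
      _ = (d:ℝ) := Real.rpow_one _
  set φ : ℝ → ℝ := fun x => D * x / M ^ (1 - p) - (n:ℝ) * D * x ^ p with hφdef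
  clear_value c₀ p α D φ
  -- Δ ≤ M
  have hΔM : Δ ≤ M := by
    have h1 : M ^ (1 - 1/(2*(n:ℝ))) ≤ M ^ (1:ℝ) :=
      Real.rpow_le_rpow_of_exponent_le hM (by
        have : 0 < 1/(2*(n:ℝ)) := by positivity
        linarith)
    rw [Real.rpow_one] at h1
    calc Δ ≤ c₀ * M ^ (1 - 1/(2*(n:ℝ))) := hΔle
      _ ≤ 1 * M := mul_le_mul hc₀1 h1 (Real.rpow_nonneg hM0.le _) (by norm_num)
      _ = M := one_mul M
  -- phase bound
  have hphase : ∀ x ∈ Set.Icc M (M + Δ), |φ x - φ M| ≤ 1/64 := by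
    -- the auxiliary function g with φ = D * g
    set g : ℝ → ℝ := fun t => t * M ^ (p - 1) - (n:ℝ) * t ^ p with hgdef
    have hφg : ∀ x : ℝ, φ x = D * g x := by
      intro x
      have h1 : M ^ (p - 1) * M ^ (1 - p) = 1 := by
        rw [← Real.rpow_add hM0]; norm_num
      have hMp : (0:ℝ) < M ^ (1 - p) := Real.rpow_pos_of_pos hM0 _
      simp only [hφdef, hgdef]
      field_simp
      linear_combination (-x) * h1
    have hg' : ∀ t : ℝ, 0 < t → HasDerivAt g (M ^ (p - 1) - t ^ (p - 1)) t := by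
      intro t ht
      have h1 : HasDerivAt (fun x : ℝ => x ^ p) (p * t ^ (p - 1)) t :=
        Real.hasDerivAt_rpow_const (Or.inl ht.ne')
      have h2 : HasDerivAt g (1 * M ^ (p - 1) - (n:ℝ) * (p * t ^ (p - 1))) t :=
        ((hasDerivAt_id t).mul_const _).sub (h1.const_mul _)
      have hnp : (n:ℝ) * p = 1 := by
        rw [hpdef]; field_simp
      convert h2 using 1
      rw [one_mul, ← mul_assoc, hnp, one_mul]
    intro x hx
    rcases eq_or_lt_of_le hx.1 with heq | hMx
    · rw [← heq]; simp
    · have hcont : ContinuousOn g (Set.Icc M x) := by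
        intro t ht
        exact (hg' t (lt_of_lt_of_le hM0 ht.1)).continuousAt.continuousWithinAt
      obtain ⟨c, hc, hceq⟩ := exists_hasDerivAt_eq_slope g
        (fun t => M ^ (p - 1) - t ^ (p - 1)) hMx hcont
        (fun t ht => hg' t (lt_trans hM0 ht.1))
      have hcM : M ≤ c := hc.1.le
      have hcx : c ≤ x := hc.2.le
      have hgd : g x - g M = (M ^ (p - 1) - c ^ (p - 1)) * (x - M) := by
        rw [hceq, div_mul_cancel₀ _ (sub_ne_zero.mpr hMx.ne')]
      -- derivative bounds
      have hder0 : 0 ≤ M ^ (p - 1) - c ^ (p - 1) := by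
        have := Real.rpow_le_rpow_of_nonpos hM0 hcM (by linarith : p - 1 ≤ 0)
        linarith
      have hder1 : M ^ (p - 1) - c ^ (p - 1) ≤ M ^ (p - 2) * (c - M) := by
        have h := aux_rpow_ineq hM0 hcM
          (show (0:ℝ) ≤ 1 - p by linarith) (show (1:ℝ) - p ≤ 1 by linarith)
        rw [show -(1 - p) = p - 1 by ring, show p - 1 - 1 = p - 2 by ring] at h
        exact h
      have hxM : x - M ≤ Δ := by linarith [hx.2]
      have hcMd : c - M ≤ Δ := by linarith
      have hMp2 : 0 < M ^ (p - 2) := Real.rpow_pos_of_pos hM0 _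
      -- |g x - g M| ≤ M^(p-2) Δ²
      have hgb : |g x - g M| ≤ M ^ (p - 2) * Δ * Δ := by
        rw [hgd, abs_mul, _root_.abs_of_nonneg hder0,
          _root_.abs_of_nonneg (by linarith : (0:ℝ) ≤ x - M)]
        have h1 : M ^ (p - 1) - c ^ (p - 1) ≤ M ^ (p - 2) * Δ := by
          calc M ^ (p - 1) - c ^ (p - 1) ≤ M ^ (p - 2) * (c - M) := hder1
            _ ≤ M ^ (p - 2) * Δ := mul_le_mul_of_nonneg_left hcMd hMp2.le
        exact mul_le_mul h1 hxM (by linarith) (by positivity)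
      -- Δ² ≤ c₀² M^(2-p)
      have hsq : Δ * Δ ≤ c₀ ^ 2 * M ^ (2 - p) := by
        have h1 : M ^ (1 - 1/(2*(n:ℝ))) * M ^ (1 - 1/(2*(n:ℝ))) = M ^ (2 - p) := by
          rw [← Real.rpow_add hM0]
          congr 1
          rw [hpdef]; ring
        have h2 : 0 ≤ M ^ (1 - 1/(2*(n:ℝ))) := Real.rpow_nonneg hM0.le _
        calc Δ * Δ ≤ (c₀ * M ^ (1 - 1/(2*(n:ℝ)))) * (c₀ * M ^ (1 - 1/(2*(n:ℝ)))) := by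
              exact mul_le_mul hΔle hΔle hΔ.le (by positivity)
          _ = c₀ ^ 2 * (M ^ (1 - 1/(2*(n:ℝ))) * M ^ (1 - 1/(2*(n:ℝ)))) := by ring
          _ = c₀ ^ 2 * M ^ (2 - p) := by rw [h1]
      have hMcancel : M ^ (p - 2) * M ^ (2 - p) = 1 := by
        rw [← Real.rpow_add hM0]; norm_num
      have hφb : |φ x - φ M| ≤ D * c₀ ^ 2 := by
        rw [hφg x, hφg M, ← mul_sub, abs_mul, _root_.abs_of_nonneg hD0.le]
        calc D * |g x - g M| ≤ D * (M ^ (p - 2) * (Δ * Δ)) := by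
              apply mul_le_mul_of_nonneg_left _ hD0.le
              calc |g x - g M| ≤ M ^ (p - 2) * Δ * Δ := hgb
                _ = M ^ (p - 2) * (Δ * Δ) := by ring
          _ ≤ D * (M ^ (p - 2) * (c₀ ^ 2 * M ^ (2 - p))) := by
              apply mul_le_mul_of_nonneg_left _ hD0.le
              exact mul_le_mul_of_nonneg_left hsq hMp2.le
          _ = D * c₀ ^ 2 * (M ^ (p - 2) * M ^ (2 - p)) := by ring
          _ = D * c₀ ^ 2 := by rw [hMcancel, mul_one]
      -- D c₀² ≤ 1/64
      have hfinal : D * c₀ ^ 2 ≤ 1/64 := by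
        have h2 : D * c₀^2 ≤ (d:ℝ) * c₀^2 := mul_le_mul_of_nonneg_right hDled (sq_nonneg _)
        have h5 : (d:ℝ) * c₀^2 = (d:ℝ)/(64*((d:ℝ)+1)^2) := by
          rw [hc₀def]; field_simp; norm_num
        linarith [h2, h5.le, h5.ge, hdc]
      linarith
  -- cosine bound
  have hcos : ∀ x ∈ Set.Icc M (M + Δ), (1:ℝ)/2 ≤ Real.cos (2*π*(φ x - φ M)) := by
    intro x hx
    have h1 := hphase x hx
    have hπ4 : π ≤ 4 := by linarith [Real.pi_le_four]
    have hπ0 : 0 < π := Real.pi_pos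
    have h2 : |2*π*(φ x - φ M)| ≤ 1/2 := by
      rw [abs_mul, _root_.abs_of_nonneg (by positivity : (0:ℝ) ≤ 2*π)]
      have hmm := mul_le_mul (by linarith : 2*π ≤ 8) h1
        (_root_.abs_nonneg (φ x - φ M)) (by norm_num : (0:ℝ) ≤ 8)
      linarith
    have h3 := Real.one_sub_sq_div_two_le_cos (x := 2*π*(φ x - φ M))
    have h4 : (2*π*(φ x - φ M))^2 ≤ (1/2:ℝ)^2 := by
      rw [← _root_.sq_abs]
      exact pow_le_pow_left₀ (_root_.abs_nonneg _) h2 2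
    norm_num at h4
    linarith
  -- names
  set h : ℝ → ℝ := fun x => w x * Real.cos (2*π*(φ x - φ M)) * x ^ α with hhdef
  set u : ℂ := Complex.exp (((-(2*π*φ M) : ℝ) : ℂ) * Complex.I) with hudef
  have hu1 : ‖u‖ = 1 := by
    rw [hudef, Complex.norm_exp]
    simp
  set F : ℝ → ℂ := fun x => ((w x : ℝ) : ℂ) *
      Complex.exp (2 * (Real.pi : ℂ) * Complex.I * ((φ x : ℝ) : ℂ)) *
      ((x ^ α : ℝ) : ℂ) with hFdef
  clear_value u F
  -- pointwise identity
  have hre : ∀ x : ℝ, (u * F x).re = h x := by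
    intro x
    simp only [hhdef]
    have hexp : u * Complex.exp (2 * (Real.pi : ℂ) * Complex.I * ((φ x : ℝ) : ℂ))
        = Complex.exp (((2*π*(φ x - φ M) : ℝ) : ℂ) * Complex.I) := by
      rw [hudef, ← Complex.exp_add]
      congr 1
      push_cast
      ring
    have huF : u * F x = ((w x * x ^ α : ℝ) : ℂ) *
        Complex.exp (((2*π*(φ x - φ M) : ℝ) : ℂ) * Complex.I) := by
      rw [← hexp, hFdef]
      push_cast
      ring
    rw [huF, Complex.re_ofReal_mul, Complex.exp_ofReal_mul_I_re]
    ring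
  -- measurability / integrability of F on Ioc
  have hmeasF : Measurable F := by
    rw [hFdef]
    apply Measurable.mul
    apply Measurable.mul
    · exact Complex.measurable_ofReal.comp hwm
    · apply Complex.measurable_exp.comp
      apply Measurable.const_mul
      apply Complex.measurable_ofReal.comp
      rw [hφdef]
      fun_prop
    · apply Complex.measurable_ofReal.comp
      fun_prop
  have hIoc : MeasurableSet (Set.Ioc M (M + Δ)) := measurableSet_Ioc
  have hvol : volume (Set.Ioc M (M + Δ)) < ⊤ := measure_Ioc_lt_top
  have hFint : IntegrableOn F (Set.Ioc M (M + Δ)) volume := by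
    apply Integrable.mono' (g := fun _ => (1:ℝ))
      (integrableOn_const hvol.ne)
      hmeasF.aestronglyMeasurable
    filter_upwards [ae_restrict_mem hIoc] with x hx
    have hx1 : (1:ℝ) ≤ x := le_of_lt (lt_of_le_of_lt hM hx.1)
    have hx0 : (0:ℝ) < x := lt_of_lt_of_le one_pos hx1
    rw [hFdef]
    simp only [norm_mul, Complex.norm_real]
    have h1 : ‖w x‖ ≤ 1 := by
      rw [Real.norm_eq_abs, _root_.abs_of_nonneg (hw0 x)]; exact hw1 x
    have h2 : ‖Complex.exp (2 * (Real.pi : ℂ) * Complex.I * ((φ x : ℝ) : ℂ))‖ = 1 := by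
      rw [Complex.norm_exp]
      have : (2 * (Real.pi : ℂ) * Complex.I * ((φ x : ℝ) : ℂ)).re = 0 := by
        simp [Complex.mul_re, Complex.mul_im]
      rw [this, Real.exp_zero]
    have h3 : ‖x ^ α‖ ≤ 1 := by
      rw [Real.norm_eq_abs, _root_.abs_of_nonneg (Real.rpow_nonneg hx0.le α)]
      exact Real.rpow_le_one_of_one_le_of_nonpos hx1 hαneg
    calc ‖w x‖ * ‖Complex.exp _‖ * ‖x ^ α‖ ≤ 1 * 1 * 1 := by
          apply mul_le_mul _ h3 (norm_nonneg _) (by norm_num)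
          rw [h2]
          simpa using h1
      _ = 1 := by norm_num
  have huFint : IntegrableOn (fun x => u * F x) (Set.Ioc M (M + Δ)) volume :=
    hFint.const_mul u
  have hhint : IntegrableOn h (Set.Ioc M (M + Δ)) volume := by
    have h0 : IntegrableOn (fun x => (u * F x).re) (Set.Ioc M (M + Δ)) volume := huFint.re
    exact h0.congr_fun (fun x _ => hre x) hIoc
  -- nonnegativity of h on Ioc
  have hh0 : ∀ x ∈ Set.Ioc M (M + Δ), 0 ≤ h x := by
    intro x hx
    have hx' : x ∈ Set.Icc M (M + Δ) := Set.Ioc_subset_Icc_self hx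
    have hx0 : (0:ℝ) < x := lt_of_lt_of_le hM0 hx'.1
    have := hcos x hx'
    have := hw0 x
    have := Real.rpow_nonneg hx0.le α
    rw [hhdef]
    positivity
  -- the middle interval
  set S : Set ℝ := Set.Icc (M + Δ/4) (M + 3*Δ/4) with hSdef
  have hSsub : S ⊆ Set.Ioc M (M + Δ) := by
    intro x hx
    constructor
    · linarith [hx.1]
    · linarith [hx.2]
  have hSmeas : MeasurableSet S := measurableSet_Icc
  have hSvol : volume S = ENNReal.ofReal (Δ/2) := by
    rw [hSdef, Real.volume_Icc]
    congr 1
    ring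
  -- lower bound on mid interval
  have hmidlb : ∀ x ∈ S, (1:ℝ)/2 * (M + Δ) ^ α ≤ h x := by
    intro x hx
    have hx' : x ∈ Set.Icc M (M + Δ) := Set.Ioc_subset_Icc_self (hSsub hx)
    have hx0 : (0:ℝ) < x := lt_of_lt_of_le hM0 hx'.1
    have hwx : w x = 1 := hmid x hx
    have hcx := hcos x hx'
    have hxα : (M + Δ) ^ α ≤ x ^ α :=
      Real.rpow_le_rpow_of_nonpos hx0 hx'.2 hαneg
    rw [hhdef]
    simp only [hwx, one_mul]
    calc (1:ℝ)/2 * (M + Δ) ^ α ≤ Real.cos (2*π*(φ x - φ M)) * x ^ α := by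
          apply mul_le_mul hcx hxα (Real.rpow_nonneg (by linarith) α) (by linarith)
      _ = Real.cos (2*π*(φ x - φ M)) * x ^ α := rfl
  -- arithmetic: (1/2)(M+Δ)^α · (Δ/2) ≥ (1/8) Δ M^α
  have harith : 1/8 * Δ * M ^ α ≤ (1/2 * (M + Δ) ^ α) * (Δ/2) := by
    have h2M : (M + Δ) ^ α ≥ 1/2 * M ^ α := by
      have hle : M + Δ ≤ 2 * M := by linarith
      have h1 : (2*M) ^ α ≤ (M + Δ) ^ α :=
        Real.rpow_le_rpow_of_nonpos (by linarith) hle hαneg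
      have h2 : (2*M) ^ α = 2 ^ α * M ^ α := Real.mul_rpow (by norm_num) hM0.le
      have h3 : (1:ℝ)/2 ≤ (2:ℝ) ^ α := by
        calc (1:ℝ)/2 = (2:ℝ) ^ (-1:ℝ) := by rw [Real.rpow_neg_one]; norm_num
          _ ≤ (2:ℝ) ^ α := Real.rpow_le_rpow_of_exponent_le one_le_two hα1
      have h5 : 0 ≤ M ^ α := Real.rpow_nonneg hM0.le α
      have h6 : 1/2 * M ^ α ≤ 2 ^ α * M ^ α :=
        mul_le_mul_of_nonneg_right h3 h5
      linarith [h1, h6, h2.le, h2.ge]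
    have h7 : (Δ/4) * (1/2 * M ^ α) ≤ (Δ/4) * ((M + Δ) ^ α) :=
      mul_le_mul_of_nonneg_left h2M (by linarith)
    linarith [h7]
  -- the main chain
  have hMle : M ≤ M + Δ := by linarith
  rw [intervalIntegral.integral_of_le hMle]
  have hgoal : (∫ x in Set.Ioc M (M + Δ), ((w x : ℝ) : ℂ) *
            Complex.exp (2 * (Real.pi : ℂ) * Complex.I *
              ((D * x / M ^ (1 - p) - (n : ℝ) * D * x ^ p : ℝ) : ℂ)) *
            ((x ^ α : ℝ) : ℂ)) = ∫ x in Set.Ioc M (M + Δ), F x := by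
    simp only [hFdef, hφdef]
  calc 1/8 * Δ * M ^ α
      ≤ (1/2 * (M + Δ) ^ α) * (Δ/2) := harith
    _ = (1/2 * (M + Δ) ^ α) * (volume S).toReal := by
        rw [hSvol, ENNReal.toReal_ofReal (by linarith)]
    _ ≤ ∫ x in S, h x := by
        refine (le_of_eq ?_).trans
          (setIntegral_ge_of_const_le (c := 1/2 * (M + Δ) ^ α) hSmeas ?_ ?_ ?_)
        · rw [smul_eq_mul]; exact mul_comm _ _
        · rw [hSvol]; exact ENNReal.ofReal_ne_top
        · exact hmidlb
        · exact hhint.mono_set hSsub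
    _ ≤ ∫ x in Set.Ioc M (M + Δ), h x := by
        apply setIntegral_mono_set hhint
        · exact (ae_restrict_iff' hIoc).2 (Filter.Eventually.of_forall hh0)
        · exact Filter.Eventually.of_forall hSsub
    _ = ∫ x in Set.Ioc M (M + Δ), (u * F x).re := by
        apply setIntegral_congr_fun hIoc
        intro x _
        exact (hre x).symm
    _ = (∫ x in Set.Ioc M (M + Δ), u * F x).re := integral_re huFint
    _ = (u * ∫ x in Set.Ioc M (M + Δ), F x).re := by rw [integral_const_mul]
    _ ≤ ‖u * ∫ x in Set.Ioc M (M + Δ), F x‖ := Complex.re_le_norm _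
    _ = ‖∫ x in Set.Ioc M (M + Δ), F x‖ := by
        rw [norm_mul, hu1, one_mul]
    _ = ‖(∫ x in Set.Ioc M (M + Δ), ((w x : ℝ) : ℂ) *
            Complex.exp (2 * (Real.pi : ℂ) * Complex.I *
              ((D * x / M ^ (1 - p) - (n : ℝ) * D * x ^ p : ℝ) : ℂ)) *
            ((x ^ α : ℝ) : ℂ))‖ := by rw [hgoal]
end

section
/- Let a : ℤ → ℂ, let α ∈ ℝ, and let M, U, Δ be positive integers with Δ ≤ U. Set A = max{|a(m)| : M ≤ m ≤ M + U + Δ − 1}, S_1 = Σ_{h=0}^{Δ−1} e(αh), and S_2 = Σ_{m=M}^{M+U} a(m)·e(αm). Then there exists an integer t with M ≤ t ≤ M + U − Δ + 1 such that |Σ_{m=t}^{t+Δ−1} a(m)| ≥ (|S_1|·|S_2| − 2·Δ^2·A) / (U + 1). -/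
open Complex Real Finset

noncomputable def Ee (α : ℝ) (k : ℤ) : ℂ :=
  Complex.exp (2 * (Real.pi : ℂ) * Complex.I * ((α * (k : ℝ) : ℝ) : ℂ))

lemma Ee_mul (α : ℝ) (j k : ℤ) : Ee α j * Ee α k = Ee α (j + k) := by
  rw [Ee, Ee, Ee, ← Complex.exp_add]
  congr 1
  push_cast
  ring

lemma abs_Ee (α : ℝ) (k : ℤ) : ‖Ee α k‖ = 1 := by
  have : Ee α k = Complex.exp (((2 * Real.pi * (α * (k:ℝ))) : ℝ) * Complex.I) := by
    rw [Ee]; congr 1; push_cast; ring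
  rw [this, Complex.norm_exp_ofReal_mul_I]

lemma fiber_sum (a : ℤ → ℂ) (M U Δ n : ℤ) :
    ∑ p ∈ ((Finset.range Δ.toNat) ×ˢ (Finset.Icc M (M+U))).filter
        (fun p => (p.1 : ℤ) + p.2 = n), a p.2
      = ∑ m ∈ Finset.Icc (max M (n - Δ + 1)) (min (M + U) n), a m := by
  apply Finset.sum_nbij' (i := fun p => p.2) (j := fun m => ((n - m).toNat, m))
  · intro p hp
    simp only [Finset.mem_filter, Finset.mem_product, Finset.mem_range, Finset.mem_Icc] at hp ⊢
    omega
  · intro m hm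
    simp only [Finset.mem_filter, Finset.mem_product, Finset.mem_range, Finset.mem_Icc,
      le_max_iff, min_le_iff, max_le_iff, le_min_iff] at hm ⊢
    omega
  · intro p hp
    simp only [Finset.mem_filter, Finset.mem_product, Finset.mem_range, Finset.mem_Icc] at hp
    ext
    · simp; omega
    · rfl
  · intro m _; rfl
  · intro m _; rfl

/-- The combinatorial core of the Ω-result: multiplying a long twisted sum `S₂` by a
geometric sum `S₁` of length `Δ` and rearranging produces many short untwisted sums of
length `Δ`, one of which must have size at least `(|S₁||S₂| - 2Δ²A)/(U+1)`, where `A` is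
the maximum of `|a(m)|` over the relevant range. -/
theorem short_sum_from_resonance (a : ℤ → ℂ) (α : ℝ) (M U Δ : ℤ)
    (hM : 0 < M) (hU : 0 < U) (hΔ : 0 < Δ) (hΔU : Δ ≤ U) (A : ℝ)
    (hA : IsGreatest ((fun m => ‖a m‖) '' Set.Icc M (M + U + Δ - 1)) A) :
    ∃ t : ℤ, M ≤ t ∧ t ≤ M + U - Δ + 1 ∧
      (‖∑ h ∈ Finset.range Δ.toNat,
            Complex.exp (2 * (Real.pi : ℂ) * Complex.I * ((α * (h : ℝ) : ℝ) : ℂ))‖ *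
          ‖∑ m ∈ Finset.Icc M (M + U),
            a m * Complex.exp (2 * (Real.pi : ℂ) * Complex.I * ((α * (m : ℝ) : ℝ) : ℂ))‖ -
          2 * (Δ : ℝ) ^ 2 * A) / ((U : ℝ) + 1) ≤
        ‖∑ m ∈ Finset.Icc t (t + Δ - 1), a m‖ := by
  classical
  -- basic facts about A
  obtain ⟨⟨m₀, _, hm₀A⟩, hub⟩ := hA
  have hA0 : 0 ≤ A := hm₀A ▸ norm_nonneg _
  have hAle : ∀ m : ℤ, M ≤ m → m ≤ M + U + Δ - 1 → ‖a m‖ ≤ A := by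
    intro m h1 h2; exact hub ⟨m, ⟨h1, h2⟩, rfl⟩
  -- rewrite S₁ and S₂ using Ee
  have hS1 : (∑ h ∈ Finset.range Δ.toNat,
      Complex.exp (2 * (Real.pi : ℂ) * Complex.I * ((α * (h : ℝ) : ℝ) : ℂ)))
      = ∑ h ∈ Finset.range Δ.toNat, Ee α (h : ℤ) := by
    apply Finset.sum_congr rfl; intro h _; rw [Ee]; norm_num
  have hS2 : (∑ m ∈ Finset.Icc M (M + U),
      a m * Complex.exp (2 * (Real.pi : ℂ) * Complex.I * ((α * (m : ℝ) : ℝ) : ℂ)))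
      = ∑ m ∈ Finset.Icc M (M + U), a m * Ee α m := by rfl
  set S₁ : ℂ := ∑ h ∈ Finset.range Δ.toNat, Ee α (h : ℤ) with hS1d
  set S₂ : ℂ := ∑ m ∈ Finset.Icc M (M + U), a m * Ee α m with hS2d
  rw [hS1, hS2]
  -- the short sum function
  set F : ℤ → ℝ := fun t => ‖∑ m ∈ Finset.Icc t (t + Δ - 1), a m‖ with hF
  -- the maximizing t
  have hne : (Finset.Icc M (M + U - Δ + 1)).Nonempty := by
    rw [Finset.nonempty_Icc]; omega
  obtain ⟨t, ht, htmax⟩ := Finset.exists_max_image _ F hne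
  rw [Finset.mem_Icc] at ht
  refine ⟨t, ht.1, ht.2, ?_⟩
  -- key rearrangement
  have key : S₁ * S₂ = ∑ n ∈ Finset.Icc M (M + U + Δ - 1),
      (∑ m ∈ Finset.Icc (max M (n - Δ + 1)) (min (M + U) n), a m) * Ee α n := by
    rw [hS1d, hS2d, Finset.sum_mul_sum]
    rw [← Finset.sum_product']
    have hmaps : ∀ p ∈ (Finset.range Δ.toNat) ×ˢ (Finset.Icc M (M+U)),
        (fun p : ℕ × ℤ => (p.1 : ℤ) + p.2) p ∈ Finset.Icc M (M + U + Δ - 1) := by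
      intro p hp
      simp only [Finset.mem_product, Finset.mem_range, Finset.mem_Icc] at hp ⊢
      omega
    rw [← Finset.sum_fiberwise_of_maps_to hmaps (fun p => Ee α p.1 * (a p.2 * Ee α p.2))]
    apply Finset.sum_congr rfl
    intro n _
    rw [← fiber_sum a M U Δ n, Finset.sum_mul]
    apply Finset.sum_congr rfl
    intro p hp
    simp only [Finset.mem_filter] at hp
    rw [← hp.2, ← Ee_mul]
    ring
  -- triangle inequality
  have tri : ‖S₁‖ * ‖S₂‖ ≤ ∑ n ∈ Finset.Icc M (M + U + Δ - 1),
      ‖∑ m ∈ Finset.Icc (max M (n - Δ + 1)) (min (M + U) n), a m‖ := by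
    calc ‖S₁‖ * ‖S₂‖ = ‖S₁ * S₂‖ := (norm_mul _ _).symm
    _ = ‖∑ n ∈ Finset.Icc M (M + U + Δ - 1),
        (∑ m ∈ Finset.Icc (max M (n - Δ + 1)) (min (M + U) n), a m) * Ee α n‖ := by rw [key]
    _ ≤ ∑ n ∈ Finset.Icc M (M + U + Δ - 1),
        ‖(∑ m ∈ Finset.Icc (max M (n - Δ + 1)) (min (M + U) n), a m) * Ee α n‖ :=
      norm_sum_le _ _
    _ = _ := by
      apply Finset.sum_congr rfl; intro n _; rw [norm_mul, abs_Ee, mul_one]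
  -- each term is ≤ Δ * A
  have termbd : ∀ n : ℤ, M ≤ n → n ≤ M + U + Δ - 1 →
      ‖∑ m ∈ Finset.Icc (max M (n - Δ + 1)) (min (M + U) n), a m‖ ≤ (Δ : ℝ) * A := by
    intro n h1 h2
    calc ‖∑ m ∈ Finset.Icc (max M (n - Δ + 1)) (min (M + U) n), a m‖
        ≤ ∑ m ∈ Finset.Icc (max M (n - Δ + 1)) (min (M + U) n), ‖a m‖ :=
          norm_sum_le _ _
      _ ≤ ∑ _m ∈ Finset.Icc (max M (n - Δ + 1)) (min (M + U) n), A := by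
          apply Finset.sum_le_sum
          intro m hm
          rw [Finset.mem_Icc] at hm
          exact hAle m (by omega) (by omega)
      _ = ((Finset.Icc (max M (n - Δ + 1)) (min (M + U) n)).card : ℝ) * A := by
          rw [Finset.sum_const, nsmul_eq_mul]
      _ ≤ (Δ : ℝ) * A := by
          apply mul_le_mul_of_nonneg_right _ hA0
          rw [Int.card_Icc]
          have : (min (M + U) n + 1 - max M (n - Δ + 1)) ≤ Δ := by omega
          calc ((min (M + U) n + 1 - max M (n - Δ + 1)).toNat : ℝ)
              = ((min (M + U) n + 1 - max M (n - Δ + 1)).toNat : ℤ) := by norm_cast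
            _ ≤ (Δ : ℝ) := by exact_mod_cast le_trans (by omega : ((min (M + U) n + 1 - max M (n - Δ + 1)).toNat : ℤ) ≤ max 0 (min (M + U) n + 1 - max M (n - Δ + 1))) (by omega)
  -- split into interior and boundary
  set inter := Finset.Icc (M + Δ - 1) (M + U) with hinter
  have hsub : inter ⊆ Finset.Icc M (M + U + Δ - 1) := by
    intro n hn; rw [Finset.mem_Icc] at hn ⊢; omega
  have split : ∑ n ∈ Finset.Icc M (M + U + Δ - 1),
      ‖∑ m ∈ Finset.Icc (max M (n - Δ + 1)) (min (M + U) n), a m‖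
      = (∑ n ∈ Finset.Icc M (M + U + Δ - 1) \ inter,
          ‖∑ m ∈ Finset.Icc (max M (n - Δ + 1)) (min (M + U) n), a m‖)
      + ∑ n ∈ inter, ‖∑ m ∈ Finset.Icc (max M (n - Δ + 1)) (min (M + U) n), a m‖ :=
    (Finset.sum_sdiff hsub).symm
  -- boundary bound
  have bdry : ∑ n ∈ Finset.Icc M (M + U + Δ - 1) \ inter,
      ‖∑ m ∈ Finset.Icc (max M (n - Δ + 1)) (min (M + U) n), a m‖
      ≤ 2 * (Δ : ℝ) ^ 2 * A := by
    calc ∑ n ∈ Finset.Icc M (M + U + Δ - 1) \ inter,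
        ‖∑ m ∈ Finset.Icc (max M (n - Δ + 1)) (min (M + U) n), a m‖
        ≤ ∑ _n ∈ Finset.Icc M (M + U + Δ - 1) \ inter, (Δ : ℝ) * A := by
          apply Finset.sum_le_sum
          intro n hn
          rw [Finset.mem_sdiff, Finset.mem_Icc] at hn
          exact termbd n hn.1.1 hn.1.2
      _ = ((Finset.Icc M (M + U + Δ - 1) \ inter).card : ℝ) * ((Δ:ℝ) * A) := by
          rw [Finset.sum_const, nsmul_eq_mul]
      _ ≤ (2 * (Δ:ℝ)) * ((Δ:ℝ) * A) := by
          apply mul_le_mul_of_nonneg_right _ (by positivity)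
          rw [Finset.card_sdiff_of_subset hsub, hinter, Int.card_Icc, Int.card_Icc]
          push_cast
          have h1 : ((M + U + Δ - 1 + 1 - M).toNat : ℤ) = U + Δ := by omega
          have h2 : ((M + U + 1 - (M + Δ - 1)).toNat : ℤ) = U - Δ + 2 := by omega
          have h3 : ((M + U + Δ - 1 + 1 - M).toNat : ℤ) - ((M + U + 1 - (M + Δ - 1)).toNat : ℤ) ≤ 2 * Δ := by omega
          have h4 : ((M + U + 1 - (M + Δ - 1)).toNat) ≤ ((M + U + Δ - 1 + 1 - M).toNat) := by omega
          have := Nat.cast_sub h4 (R := ℝ)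
          rw [this]
          have : (((M + U + Δ - 1 + 1 - M).toNat : ℝ)) - (((M + U + 1 - (M + Δ - 1)).toNat : ℝ)) ≤ ((2 * Δ : ℤ) : ℝ) := by
            exact_mod_cast h3
          calc (((M + U + Δ - 1 + 1 - M).toNat : ℝ)) - (((M + U + 1 - (M + Δ - 1)).toNat : ℝ)) ≤ ((2 * Δ : ℤ) : ℝ) := this
            _ = 2 * (Δ:ℝ) := by push_cast; ring
      _ = 2 * (Δ : ℝ) ^ 2 * A := by ring
  -- interior: equals sum of short sums
  have interior_eq : ∑ n ∈ inter,
      ‖∑ m ∈ Finset.Icc (max M (n - Δ + 1)) (min (M + U) n), a m‖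
      = ∑ t' ∈ Finset.Icc M (M + U - Δ + 1), F t' := by
    apply Finset.sum_nbij' (i := fun n => n - Δ + 1) (j := fun t' => t' + Δ - 1)
    · intro n hn
      rw [hinter, Finset.mem_Icc] at hn
      rw [Finset.mem_Icc]; omega
    · intro t' ht'
      rw [Finset.mem_Icc] at ht'
      rw [hinter, Finset.mem_Icc]; omega
    · intro n _; omega
    · intro t' _; omega
    · intro n hn
      rw [hinter, Finset.mem_Icc] at hn
      simp only [hF]
      rw [show M ⊔ (n - Δ + 1) = n - Δ + 1 by omega,
        show (M + U) ⊓ n = n by omega,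
        show n - Δ + 1 + Δ - 1 = n by omega]
  -- interior bound via max
  have interior_bd : ∑ t' ∈ Finset.Icc M (M + U - Δ + 1), F t' ≤ ((U : ℝ) + 1) * F t := by
    have hF0 : 0 ≤ F t := norm_nonneg _
    calc ∑ t' ∈ Finset.Icc M (M + U - Δ + 1), F t'
        ≤ ∑ _t' ∈ Finset.Icc M (M + U - Δ + 1), F t :=
          Finset.sum_le_sum (fun i hi => htmax i hi)
      _ = ((Finset.Icc M (M + U - Δ + 1)).card : ℝ) * F t := by
          rw [Finset.sum_const, nsmul_eq_mul]
      _ ≤ ((U : ℝ) + 1) * F t := by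
          apply mul_le_mul_of_nonneg_right _ hF0
          rw [Int.card_Icc]
          have : (((M + U - Δ + 1 + 1 - M).toNat : ℤ) : ℝ) ≤ (U : ℝ) + 1 := by
            have : ((M + U - Δ + 1 + 1 - M).toNat : ℤ) ≤ U + 1 := by omega
            exact_mod_cast this
          exact_mod_cast this
  -- conclude
  rw [div_le_iff₀ (by positivity : (0:ℝ) < (U:ℝ) + 1)]
  have : ‖S₁‖ * ‖S₂‖ ≤ ((U:ℝ) + 1) * F t + 2 * (Δ:ℝ) ^ 2 * A := by
    calc ‖S₁‖ * ‖S₂‖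
        ≤ _ := tri
      _ = _ := split
      _ ≤ ((U:ℝ) + 1) * F t + 2 * (Δ:ℝ) ^ 2 * A := by
          rw [interior_eq]
          linarith [interior_bd, bdry]
  calc ‖S₁‖ * ‖S₂‖ - 2 * (Δ:ℝ)^2 * A ≤ ((U:ℝ) + 1) * F t := by linarith
    _ = F t * ((U:ℝ) + 1) := by ring
end

section
/- There exists a constant C > 0 such that for every positive integer N and every real number t with |t| ≥ 1, one has |Γ(1/2 − N + it)| ≤ C·e^{−π|t|/2} / (N − 1)!. -/
open Complex Real

private lemma gamma_half_line (t : ℝ) (ht : 1 ≤ |t|) :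
    ‖Complex.Gamma (1/2 + (t : ℂ) * Complex.I)‖ ≤
      Real.sqrt (2 * Real.pi) * Real.exp (-Real.pi * |t| / 2) := by
  set s : ℂ := 1/2 + (t : ℂ) * Complex.I with hs
  have hconj : (1 : ℂ) - s = (starRingEnd ℂ) s := by
    simp [hs, Complex.ext_iff]; norm_num
  have h1 := Complex.Gamma_mul_Gamma_one_sub s
  rw [hconj, Complex.Gamma_conj, Complex.mul_conj] at h1
  have hsin : Complex.sin (↑Real.pi * s) = (Real.cosh (Real.pi * t) : ℂ) := by
    have hps : (Real.pi : ℂ) * s = ↑Real.pi / 2 + (↑(Real.pi * t)) * Complex.I := by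
      push_cast [hs]; ring
    rw [hps]
    have : (Real.pi : ℂ) / 2 + (↑(Real.pi * t)) * Complex.I
        = ↑Real.pi / 2 - (-((↑(Real.pi * t)) * Complex.I)) := by ring
    rw [this, Complex.sin_pi_div_two_sub, Complex.cos_neg, Complex.cos_mul_I,
      Complex.ofReal_cosh]
  rw [hsin] at h1
  have hcosh : (0:ℝ) < Real.cosh (Real.pi * t) := Real.cosh_pos _
  have hnsq : Complex.normSq (Complex.Gamma s) = Real.pi / Real.cosh (Real.pi * t) := by
    have : ((Complex.normSq (Complex.Gamma s) : ℝ) : ℂ)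
        = ((Real.pi / Real.cosh (Real.pi * t) : ℝ) : ℂ) := by
      rw [h1]; push_cast; ring
    exact_mod_cast this
  have hcosh_ge : Real.exp (Real.pi * |t|) / 2 ≤ Real.cosh (Real.pi * t) := by
    rw [Real.cosh_eq]
    rcases abs_cases t with ⟨h, _⟩ | ⟨h, _⟩
    · rw [h]
      have := (Real.exp_pos (-(Real.pi * t))).le
      linarith
    · rw [h, mul_neg]
      have := (Real.exp_pos (Real.pi * t)).le
      linarith
  have hfrac : Real.pi / Real.cosh (Real.pi * t) ≤ 2 * Real.pi * Real.exp (-(Real.pi * |t|)) := by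
    rw [Real.exp_neg, div_le_iff₀ hcosh]
    calc Real.pi
        = 2 * Real.pi * (Real.exp (Real.pi * |t|))⁻¹ * (Real.exp (Real.pi * |t|) / 2) := by
          field_simp
      _ ≤ 2 * Real.pi * (Real.exp (Real.pi * |t|))⁻¹ * Real.cosh (Real.pi * t) :=
          mul_le_mul_of_nonneg_left hcosh_ge (by positivity)
  calc ‖Complex.Gamma s‖ = Real.sqrt (Real.pi / Real.cosh (Real.pi * t)) := by
        rw [Complex.norm_def, hnsq]
    _ ≤ Real.sqrt (2 * Real.pi * Real.exp (-(Real.pi * |t|))) := Real.sqrt_le_sqrt hfrac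
    _ = Real.sqrt (2 * Real.pi) * Real.exp (-Real.pi * |t| / 2) := by
        rw [Real.sqrt_mul (by positivity), ← Real.exp_half]
        ring_nf


private lemma gamma_rec (z : ℂ) (hz : z.im ≠ 0) (N : ℕ) :
    Complex.Gamma (z + N) = (∏ j ∈ Finset.range N, (z + j)) * Complex.Gamma z := by
  induction N with
  | zero => simp
  | succ n ih =>
    have hne : z + (n : ℂ) ≠ 0 := by
      intro h
      have : (z + (n : ℂ)).im = 0 := by rw [h]; simp
      simp at this; exact hz this
    have : z + ((n+1 : ℕ) : ℂ) = (z + n) + 1 := by push_cast; ring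
    rw [this, Complex.Gamma_add_one _ hne, ih, Finset.prod_range_succ]
    ring

private lemma prod_max_eq (N : ℕ) (hN : 0 < N) :
    ∏ k ∈ Finset.range N, max (k : ℝ) 1 = (Nat.factorial (N - 1) : ℝ) := by
  induction N with
  | zero => omega
  | succ n ih =>
    rcases Nat.eq_zero_or_pos n with h | h
    · subst h; simp
    · rw [Finset.prod_range_succ, ih h]
      have h1 : max (n : ℝ) 1 = (n : ℝ) := max_eq_left (by exact_mod_cast h)
      rw [h1]
      rw [Nat.add_sub_cancel, mul_comm, ← Nat.cast_mul, Nat.mul_factorial_pred h.ne']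

/-- Gamma decay on shifted lines: `|Γ(1/2 - N + it)| ≤ C e^{-π|t|/2} / (N-1)!`
uniformly in `N ≥ 1` and `|t| ≥ 1`. -/
theorem gamma_shifted_line_bound :
    ∃ C : ℝ, 0 < C ∧ ∀ N : ℕ, 0 < N → ∀ t : ℝ, 1 ≤ |t| →
      ‖Complex.Gamma (1/2 - (N : ℂ) + (t : ℂ) * Complex.I)‖ ≤
        C * Real.exp (-Real.pi * |t| / 2) / (Nat.factorial (N - 1) : ℝ) := by
  refine ⟨Real.sqrt (2 * Real.pi), Real.sqrt_pos.mpr (by positivity), ?_⟩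
  intro N hN t ht
  set z : ℂ := 1/2 - (N : ℂ) + (t : ℂ) * Complex.I with hz
  have hzim : z.im ≠ 0 := by
    have : z.im = t := by simp [hz]
    rw [this]; intro h; rw [h] at ht; simp at ht; linarith
  have hzN : z + (N : ℂ) = 1/2 + (t : ℂ) * Complex.I := by rw [hz]; ring
  have hrec := gamma_rec z hzim N
  rw [hzN] at hrec
  -- product lower bound
  have hprod : (Nat.factorial (N - 1) : ℝ) ≤
      ∏ j ∈ Finset.range N, ‖z + j‖ := by
    rw [← prod_max_eq N hN]
    have hrefl : ∏ k ∈ Finset.range N, max (k : ℝ) 1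
        = ∏ j ∈ Finset.range N, max ((N - 1 - j : ℕ) : ℝ) 1 := by
      exact (Finset.prod_range_reflect (fun k => max (k : ℝ) 1) N).symm
    rw [hrefl]
    apply Finset.prod_le_prod
    · intro j _; positivity
    · intro j hj
      rw [Finset.mem_range] at hj
      apply max_le
      · have h1 : ((N - 1 - j : ℕ) : ℝ) ≤ |(z + j).re| := by
          have hre : (z + j).re = 1/2 - N + j := by simp [hz]
          have hjN : (j : ℝ) ≤ (N : ℝ) - 1 := by
            have : (j : ℝ) + 1 ≤ (N : ℝ) := by exact_mod_cast hj
            linarith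
          have hcast : ((N - 1 - j : ℕ) : ℝ) = (N : ℝ) - 1 - j := by
            push_cast [Nat.cast_sub (by omega : j ≤ N - 1), Nat.cast_sub hN]
            ring
          rw [hre, hcast, abs_of_nonpos (by linarith)]
          linarith
        exact h1.trans (Complex.abs_re_le_norm _)
      · have h2 : |(z + j).im| = |t| := by
          congr 1; simp [hz]
        calc (1:ℝ) ≤ |t| := ht
          _ = |(z + j).im| := h2.symm
          _ ≤ ‖z + j‖ := Complex.abs_im_le_norm _
  have habs : ‖Complex.Gamma (1/2 + (t : ℂ) * Complex.I)‖
      = (∏ j ∈ Finset.range N, ‖z + j‖) * ‖Complex.Gamma z‖ := by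
    rw [hrec, norm_mul, norm_prod]
  have hhalf := gamma_half_line t ht
  have hfactpos : (0:ℝ) < (Nat.factorial (N - 1) : ℝ) := by
    exact_mod_cast Nat.factorial_pos _
  have hprodpos : (0:ℝ) < ∏ j ∈ Finset.range N, ‖z + j‖ :=
    lt_of_lt_of_le hfactpos hprod
  rw [le_div_iff₀ hfactpos]
  calc ‖Complex.Gamma z‖ * (Nat.factorial (N - 1) : ℝ)
      ≤ ‖Complex.Gamma z‖ * ∏ j ∈ Finset.range N, ‖z + j‖ :=
        mul_le_mul_of_nonneg_left hprod (norm_nonneg _)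
    _ = ‖Complex.Gamma (1/2 + (t : ℂ) * Complex.I)‖ := by rw [habs]; ring
    _ ≤ Real.sqrt (2 * Real.pi) * Real.exp (-Real.pi * |t| / 2) := hhalf
end
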